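/- Consider the attitude kinematics and observer on SO(3): R, R̄ : ℝ → ℝ³ˣ³ are differentiable with R(t), R̄(t) ∈ SO(3) for all t ≥ 0, Ω : ℝ → ℝ³, γ ∈ ℝ³ is a constant gyro bias, γ̄ : ℝ → ℝ³ is differentiable, s₁,…,sₙ : ℝ → ℝ³ are differentiable with ‖sᵢ(t)‖ = 1, wᵢ > 0, G(t) = Σᵢ wᵢ sᵢ(t)sᵢ(t)ᵀ, e_R(t) = (R(t)ᵀG(t)R̄(t) − R̄(t)ᵀG(t)R(t))^∨, and the equations R′(t) = R(t)·(Ω(t))^, R̄′(t) = R̄(t)·(Ω(t) + γ − γ̄(t) − k_R e_R(t))^, γ̄′(t) = k_γ e_R(t) hold for positive gains k_R, k_γ. Suppose ‖G′(t)‖ ≤ d for all t ≥ 0 and some d > 0. Set E_R(t) = R(t) − R̄(t), e_γ(t) = γ − γ̄(t), and V₀(t) = ½⟨G(t)E_R(t), E_R(t)⟩ + (1/(2k_γ))‖e_γ(t)‖². Then V₀ is differentiable and for all t ≥ 0, V₀′(t) ≤ −k_R·‖e_R(t)‖² + (d/2)·‖E_R(t)‖². -/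

import Mathlib

open Matrix Polynomial

noncomputable section

/-- The hat map sending `x ∈ ℝ³` to the skew-symmetric matrix `x̂` with `x̂ y = x × y`. -/
def hat (x : Fin 3 → ℝ) : Matrix (Fin 3) (Fin 3) ℝ :=
  !![0, -x 2, x 1; x 2, 0, -x 0; -x 1, x 0, 0]

/-- The vee map, inverse of the hat map on skew-symmetric `3 × 3` matrices. -/
def vee (A : Matrix (Fin 3) (Fin 3) ℝ) : Fin 3 → ℝ :=
  ![A 2 1, A 0 2, A 1 0]

/-- `SO3 R` iff `R` is a rotation matrix: `RᵀR = I₃` and `det R = 1`. -/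
def SO3 (R : Matrix (Fin 3) (Fin 3) ℝ) : Prop :=
  Rᵀ * R = 1 ∧ R.det = 1

/-- Frobenius inner product `⟨A,B⟩ = tr(AᵀB)`. -/
def finner (A B : Matrix (Fin 3) (Fin 3) ℝ) : ℝ := (Aᵀ * B).trace

/-- Frobenius norm `‖A‖ = √⟨A,A⟩`. -/
def fnorm (A : Matrix (Fin 3) (Fin 3) ℝ) : ℝ := Real.sqrt (finner A A)

/-- Euclidean norm of a vector. -/
def vnorm {k : ℕ} (x : Fin k → ℝ) : ℝ := Real.sqrt (x ⬝ᵥ x)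

/-- Third standard basis vector `e₃ = (0,0,1)` of `ℝ³`. -/
def e3 : Fin 3 → ℝ := ![0, 0, 1]


/-! ### Auxiliary lemmas -/

lemma finner_eq_sum (A B : Matrix (Fin 3) (Fin 3) ℝ) :
    finner A B = ∑ i, ∑ j, A i j * B i j := by
  simp [finner, Matrix.trace, Matrix.mul_apply, Matrix.diag]
  exact Finset.sum_comm

lemma trace_mul_hat (M : Matrix (Fin 3) (Fin 3) ℝ) (b : Fin 3 → ℝ) :
    (M * hat b).trace = -(vee (M - Mᵀ) ⬝ᵥ b) := by
  simp [hat, vee, Matrix.trace, Matrix.mul_apply, dotProduct, Fin.sum_univ_succ,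
    Matrix.sub_apply, Matrix.transpose_apply, Matrix.diag]
  ring

lemma finner_self_nonneg (A : Matrix (Fin 3) (Fin 3) ℝ) : 0 ≤ finner A A := by
  rw [finner_eq_sum]
  exact Finset.sum_nonneg fun i _ => Finset.sum_nonneg fun j _ => mul_self_nonneg _

lemma fnorm_sq (A : Matrix (Fin 3) (Fin 3) ℝ) : fnorm A ^ 2 = finner A A :=
  Real.sq_sqrt (finner_self_nonneg A)

lemma fnorm_nonneg (A : Matrix (Fin 3) (Fin 3) ℝ) : 0 ≤ fnorm A := Real.sqrt_nonneg _

lemma vnorm_sq {k : ℕ} (x : Fin k → ℝ) : vnorm x ^ 2 = x ⬝ᵥ x :=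
  Real.sq_sqrt (Finset.sum_nonneg fun i _ => mul_self_nonneg _)

lemma finner_le_fnorm_mul (A B : Matrix (Fin 3) (Fin 3) ℝ) :
    finner A B ≤ fnorm A * fnorm B := by
  have h2 : |finner A B| = Real.sqrt ((finner A B) ^ 2) := by
    rw [Real.sqrt_sq_eq_abs]
  have h3 : (finner A B) ^ 2 ≤ finner A A * finner B B := by
    rw [finner_eq_sum A B, finner_eq_sum A A, finner_eq_sum B B]
    simp only [← Finset.sum_product', ← sq]
    exact Finset.sum_mul_sq_le_sq_mul_sq _ _ _
  calc finner A B ≤ Real.sqrt ((finner A B)^2) := by rw [← h2]; exact le_abs_self _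
    _ ≤ Real.sqrt (finner A A * finner B B) := Real.sqrt_le_sqrt h3
    _ = fnorm A * fnorm B := Real.sqrt_mul (finner_self_nonneg A) _

lemma fnorm_mul_le (A B : Matrix (Fin 3) (Fin 3) ℝ) :
    fnorm (A * B) ≤ fnorm A * fnorm B := by
  have key : finner (A*B) (A*B) ≤ finner A A * finner B B := by
    rw [finner_eq_sum, finner_eq_sum, finner_eq_sum]
    calc ∑ i, ∑ j, (A*B) i j * (A*B) i j
        ≤ ∑ i, ∑ j, (∑ k, A i k ^2) * (∑ k, B k j ^2) := by
          refine Finset.sum_le_sum fun i _ => Finset.sum_le_sum fun j _ => ?_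
          rw [Matrix.mul_apply, ← sq]
          exact Finset.sum_mul_sq_le_sq_mul_sq _ _ _
      _ = (∑ i, ∑ k, A i k ^ 2) * (∑ j, ∑ k, B k j ^ 2) := by
          rw [← Finset.sum_mul_sum]
      _ = (∑ i, ∑ k, A i k * A i k) * (∑ k, ∑ j, B k j * B k j) := by
          simp only [← sq]
          congr 1
          exact Finset.sum_comm
  calc fnorm (A*B) = Real.sqrt (finner (A*B) (A*B)) := rfl
    _ ≤ Real.sqrt (finner A A * finner B B) := Real.sqrt_le_sqrt key
    _ = fnorm A * fnorm B := Real.sqrt_mul (finner_self_nonneg A) _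

lemma finner_sym (Gm A B : Matrix (Fin 3) (Fin 3) ℝ) (hG : Gmᵀ = Gm) :
    finner (Gm * A) B = finner (Gm * B) A := by
  unfold finner
  rw [Matrix.transpose_mul, Matrix.transpose_mul, hG]
  rw [← Matrix.trace_transpose (Bᵀ * Gm * A)]
  congr 1
  rw [Matrix.transpose_mul, Matrix.transpose_mul, Matrix.transpose_transpose, hG, mul_assoc]

lemma deriv_split (Gm Gp E E' : Matrix (Fin 3) (Fin 3) ℝ) :
    (∑ i, ∑ j, ((∑ k, (Gp i k * E k j + Gm i k * E' k j)) * E i j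
      + (∑ k, Gm i k * E k j) * E' i j))
    = finner (Gp * E) E + (finner (Gm * E') E + finner (Gm * E) E') := by
  simp only [finner_eq_sum, Matrix.mul_apply]
  simp [Fin.sum_univ_succ]
  ring

lemma cross_eq (Gm Rm Rb : Matrix (Fin 3) (Fin 3) ℝ) (hG : Gmᵀ = Gm) (Ωv bv : Fin 3 → ℝ) :
    finner (Gm * (Rm - Rb)) (Rm * hat Ωv - Rb * hat (Ωv + bv))
      = vee (Rmᵀ * Gm * Rb - Rbᵀ * Gm * Rm) ⬝ᵥ bv := by
  have h1 : (Gm * (Rm - Rb))ᵀ = (Rm - Rb)ᵀ * Gm := by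
    rw [Matrix.transpose_mul, hG]
  set Q : Matrix (Fin 3) (Fin 3) ℝ := Rmᵀ * Gm * Rb - Rbᵀ * Gm * Rm with hQ
  have hM1 : (Rm - Rb)ᵀ * Gm * Rm - ((Rm - Rb)ᵀ * Gm * Rm)ᵀ = Q := by
    simp only [Matrix.transpose_mul, Matrix.transpose_sub, Matrix.transpose_transpose, hG, hQ]
    noncomm_ring
  have hM2 : (Rm - Rb)ᵀ * Gm * Rb - ((Rm - Rb)ᵀ * Gm * Rb)ᵀ = Q := by
    simp only [Matrix.transpose_mul, Matrix.transpose_sub, Matrix.transpose_transpose, hG, hQ]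
    noncomm_ring
  calc finner (Gm * (Rm - Rb)) (Rm * hat Ωv - Rb * hat (Ωv + bv))
      = (((Rm - Rb)ᵀ * Gm * Rm) * hat Ωv).trace
        - (((Rm - Rb)ᵀ * Gm * Rb) * hat (Ωv + bv)).trace := by
        rw [finner, h1, Matrix.mul_sub, Matrix.trace_sub, ← mul_assoc, ← mul_assoc]
    _ = -(vee Q ⬝ᵥ Ωv) - -(vee Q ⬝ᵥ (Ωv + bv)) := by
        rw [trace_mul_hat, trace_mul_hat, hM1, hM2]
    _ = vee Q ⬝ᵥ bv := by rw [dotProduct_add]; ring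


/-- along the observer dynamics, the Lyapunov function
`V₀(t) = ½⟨G(t)E_R(t), E_R(t)⟩ + (1/(2k_γ))‖e_γ(t)‖²` is differentiable and satisfies
`V₀′(t) ≤ −k_R ‖e_R(t)‖² + (d/2)‖E_R(t)‖²` for all `t ≥ 0`. -/
theorem stmt_17 {n : ℕ}
    (R Rbar : ℝ → Matrix (Fin 3) (Fin 3) ℝ) (Ω : ℝ → Fin 3 → ℝ)
    (γ : Fin 3 → ℝ) (γbar : ℝ → Fin 3 → ℝ)
    (s : Fin n → ℝ → Fin 3 → ℝ) (w : Fin n → ℝ)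
    (kR kγ d : ℝ)
    (hSO3 : ∀ t ≥ (0 : ℝ), SO3 (R t) ∧ SO3 (Rbar t))
    (hw : ∀ i, 0 < w i) (hs : ∀ i t, (s i t) ⬝ᵥ (s i t) = 1)
    (hsdiff : ∀ i t, DifferentiableAt ℝ (s i) t)
    (hkR : 0 < kR) (hkγ : 0 < kγ) (hd : 0 < d)
    (G : ℝ → Matrix (Fin 3) (Fin 3) ℝ)
    (hGdef : ∀ t, G t = ∑ i, w i • vecMulVec (s i t) (s i t))
    (eR : ℝ → Fin 3 → ℝ)
    (heR : ∀ t, eR t = vee ((R t)ᵀ * G t * Rbar t - (Rbar t)ᵀ * G t * R t))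
    (hRdot : ∀ t ≥ (0 : ℝ), ∀ i j, HasDerivAt (fun τ => R τ i j) ((R t * hat (Ω t)) i j) t)
    (hRbardot : ∀ t ≥ (0 : ℝ), ∀ i j, HasDerivAt (fun τ => Rbar τ i j)
      ((Rbar t * hat (Ω t + γ - γbar t - kR • eR t)) i j) t)
    (hγbardot : ∀ t ≥ (0 : ℝ), HasDerivAt γbar (kγ • eR t) t)
    (G' : ℝ → Matrix (Fin 3) (Fin 3) ℝ)
    (hG' : ∀ t ≥ (0 : ℝ), ∀ i j, HasDerivAt (fun τ => G τ i j) (G' t i j) t)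
    (hGdot : ∀ t ≥ (0 : ℝ), fnorm (G' t) ≤ d)
    (V₀ : ℝ → ℝ)
    (hV₀ : ∀ t, V₀ t = (1 / 2) * finner (G t * (R t - Rbar t)) (R t - Rbar t) +
      (1 / (2 * kγ)) * vnorm (γ - γbar t) ^ 2) :
    (∀ t ≥ (0 : ℝ), DifferentiableAt ℝ V₀ t) ∧
    ∀ t ≥ (0 : ℝ), deriv V₀ t ≤ -kR * vnorm (eR t) ^ 2 + d / 2 * fnorm (R t - Rbar t) ^ 2 := by
  have hGsym : ∀ t, (G t)ᵀ = G t := by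
    intro t
    rw [hGdef]
    ext i j
    simp [Matrix.transpose_apply, Matrix.sum_apply, Matrix.smul_apply, vecMulVec_apply,
      mul_comm]
  have hVfun : V₀ = fun τ => (1/2 : ℝ) * (∑ i, ∑ j,
      (∑ k, G τ i k * (R τ k j - Rbar τ k j)) * (R τ i j - Rbar τ i j))
      + (1/(2*kγ)) * ∑ i, (γ i - γbar τ i)^2 := by
    funext τ
    rw [hV₀]
    congr 1
    · rw [finner_eq_sum]
      refine congrArg (fun z => 1/2 * z) ?_
      refine Finset.sum_congr rfl fun i _ => Finset.sum_congr rfl fun j _ => ?_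
      simp [Matrix.mul_apply, Matrix.sub_apply]
    · rw [vnorm_sq]
      refine congrArg (fun z => 1/(2*kγ) * z) ?_
      rw [dotProduct]
      refine Finset.sum_congr rfl fun i _ => ?_
      simp [Pi.sub_apply, sq]
  have key : ∀ t, 0 ≤ t → HasDerivAt V₀
      ((1/2) * finner (G' t * (R t - Rbar t)) (R t - Rbar t)
        - kR * (eR t ⬝ᵥ eR t)) t := by
    intro t ht
    set E : Matrix (Fin 3) (Fin 3) ℝ := R t - Rbar t with hEdef
    set Ed : Matrix (Fin 3) (Fin 3) ℝ :=
      R t * hat (Ω t) - Rbar t * hat (Ω t + γ - γbar t - kR • eR t) with hEddef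
    have hEd : ∀ i j, HasDerivAt (fun τ => R τ i j - Rbar τ i j) (Ed i j) t := by
      intro i j
      have h := (hRdot t ht i j).fun_sub (hRbardot t ht i j)
      simpa [hEddef, Matrix.sub_apply] using h
    have hγd : ∀ i, HasDerivAt (fun τ => γ i - γbar τ i) (-(kγ * eR t i)) t := by
      intro i
      have h := hasDerivAt_pi.mp (hγbardot t ht) i
      simpa using (hasDerivAt_const t (γ i)).fun_sub h
    have hA : HasDerivAt (fun τ => ∑ i, ∑ j,
        (∑ k, G τ i k * (R τ k j - Rbar τ k j)) * (R τ i j - Rbar τ i j))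
        (∑ i, ∑ j, ((∑ k, (G' t i k * E k j + G t i k * Ed k j)) * E i j
          + (∑ k, G t i k * E k j) * Ed i j)) t := by
      refine HasDerivAt.fun_sum fun i _ => HasDerivAt.fun_sum fun j _ => ?_
      exact HasDerivAt.fun_mul
        (HasDerivAt.fun_sum fun k _ => (hG' t ht i k).fun_mul (hEd k j)) (hEd i j)
    have hB : HasDerivAt (fun τ => ∑ i, (γ i - γbar τ i)^2)
        (∑ i, 2 * (γ i - γbar t i) * (-(kγ * eR t i))) t := by
      refine HasDerivAt.fun_sum fun i _ => ?_
      have h := (hγd i).fun_pow 2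
      norm_num at h
      refine h.congr_deriv ?_
      ring
    have hD := (hA.const_mul (1/2 : ℝ)).add (hB.const_mul (1/(2*kγ)))
    have hval : (1/2 : ℝ) * (∑ i, ∑ j, ((∑ k, (G' t i k * E k j + G t i k * Ed k j)) * E i j
          + (∑ k, G t i k * E k j) * Ed i j))
        + (1/(2*kγ)) * (∑ i, 2 * (γ i - γbar t i) * (-(kγ * eR t i)))
        = (1/2) * finner (G' t * E) E - kR * (eR t ⬝ᵥ eR t) := ?_
    · rw [hVfun]
      rw [hval] at hD
      exact hD
    -- now prove the derivative expression equality
    have hsplit := deriv_split (G t) (G' t) E Ed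
    have harg : Ω t + γ - γbar t - kR • eR t
        = Ω t + (γ - γbar t - kR • eR t) := by
      abel
    have hcross : finner (G t * E) Ed = eR t ⬝ᵥ (γ - γbar t) - kR * (eR t ⬝ᵥ eR t) := by
      have h := cross_eq (G t) (R t) (Rbar t) (hGsym t) (Ω t) (γ - γbar t - kR • eR t)
      rw [hEdef, hEddef, harg, h, ← heR t]
      rw [dotProduct_sub, dotProduct_smul]
      simp [smul_eq_mul]
    have hsym := finner_sym (G t) Ed E (hGsym t)
    have hBval : (∑ i, 2 * (γ i - γbar t i) * (-(kγ * eR t i)))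
        = -2 * kγ * (eR t ⬝ᵥ (γ - γbar t)) := by
      rw [dotProduct, Finset.mul_sum]
      apply Finset.sum_congr rfl
      intro i _
      simp only [Pi.sub_apply]
      ring
    rw [hsplit, hsym, hcross, hBval]
    have hkγ' : kγ ≠ 0 := ne_of_gt hkγ
    field_simp
    ring
  constructor
  · intro t ht
    exact (key t ht).differentiableAt
  · intro t ht
    rw [(key t ht).deriv]
    have hbound : finner (G' t * (R t - Rbar t)) (R t - Rbar t)
        ≤ d * fnorm (R t - Rbar t) ^ 2 := by
      calc finner (G' t * (R t - Rbar t)) (R t - Rbar t)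
          ≤ fnorm (G' t * (R t - Rbar t)) * fnorm (R t - Rbar t) :=
            finner_le_fnorm_mul _ _
        _ ≤ (fnorm (G' t) * fnorm (R t - Rbar t)) * fnorm (R t - Rbar t) :=
            mul_le_mul_of_nonneg_right (fnorm_mul_le _ _) (fnorm_nonneg _)
        _ ≤ (d * fnorm (R t - Rbar t)) * fnorm (R t - Rbar t) :=
            mul_le_mul_of_nonneg_right
              (mul_le_mul_of_nonneg_right (hGdot t ht) (fnorm_nonneg _)) (fnorm_nonneg _)
        _ = d * fnorm (R t - Rbar t) ^ 2 := by ring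
    have heq : vnorm (eR t) ^ 2 = eR t ⬝ᵥ eR t := vnorm_sq _
    nlinarith [hbound]
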